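/- Let p be an odd prime with 3 | (p-1) and ω a primitive third root of unity in F_p. Suppose c(x) = 1 + a_1 x + a_2 x^{l_1} + a_3 x^{l_1+1} + a_4 x^{l_2} + a_5 x^{l_2+1} with 3 ≤ l_1 < l_2 ≤ 3p-3, l_1 ≡ l_2 ≡ 0 (mod 3), p ∤ l_1 l_2 (l_2 - l_1), and a_i ∈ F_p for all i. If c and its derivatives up to order 3 satisfy c(1)=c(ω)=c(ω^2)=0, c'(1)=c'(ω)=c'(ω^2)=0, c''(1)=0 and c'''(1)=0, then a_5 = 0. -/

import Mathlib

open Polynomial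

theorem stmt17 (p : ℕ) [Fact p.Prime] (hodd : Odd p) (h3 : 3 ∣ p - 1)
    (ω : ZMod p) (hω3 : ω ^ 3 = 1) (hω1 : ω ≠ 1)
    (l₁ l₂ : ℕ) (hl1 : 3 ≤ l₁) (hl12 : l₁ < l₂) (hl2 : l₂ ≤ 3 * p - 3)
    (hm1 : l₁ % 3 = 0) (hm2 : l₂ % 3 = 0)
    (hp : ¬(p ∣ l₁ * l₂ * (l₂ - l₁)))
    (a₁ a₂ a₃ a₄ a₅ : ZMod p)
    (c : Polynomial (ZMod p))
    (hc : c = 1 + C a₁ * X + C a₂ * X ^ l₁ + C a₃ * X ^ (l₁ + 1) +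
      C a₄ * X ^ l₂ + C a₅ * X ^ (l₂ + 1))
    (h0 : c.eval 1 = 0 ∧ c.eval ω = 0 ∧ c.eval (ω ^ 2) = 0)
    (h1 : (derivative c).eval 1 = 0 ∧ (derivative c).eval ω = 0 ∧
      (derivative c).eval (ω ^ 2) = 0)
    (h2 : (derivative (derivative c)).eval 1 = 0)
    (h3' : (derivative (derivative (derivative c))).eval 1 = 0) :
    a₅ = 0 := by
  subst hc
  obtain ⟨-, e0a, e0b⟩ := h0
  obtain ⟨-, e1a, e1b⟩ := h1
  simp [derivative_add, derivative_mul, derivative_X_pow] at e0a e0b e1a e1b h2 h3'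
  -- basic facts about ω
  have hω0 : ω ≠ 0 := by
    intro h; rw [h] at hω3; simp at hω3
  have hpow1 : ∀ n : ℕ, n % 3 = 0 → ω ^ n = 1 := by
    intro n hn
    obtain ⟨k, hk⟩ := Nat.dvd_of_mod_eq_zero hn
    rw [hk, pow_mul, hω3, one_pow]
  have hpow2 : ∀ n : ℕ, n % 3 = 0 → 1 ≤ n → ω ^ (n - 1) = ω ^ 2 := by
    intro n hn h1n
    have key : ω ^ (n - 1) * ω = ω ^ 2 * ω := by
      rw [← pow_succ, ← pow_succ]
      rw [show n - 1 + 1 = n from by omega, hpow1 n hn, hω3]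
    exact mul_right_cancel₀ hω0 key
  have A1 : ω ^ l₁ = 1 := hpow1 l₁ hm1
  have A2 : ω ^ l₂ = 1 := hpow1 l₂ hm2
  have A3 : ω ^ (l₁ + 1) = ω := by rw [pow_succ, A1, one_mul]
  have A4 : ω ^ (l₂ + 1) = ω := by rw [pow_succ, A2, one_mul]
  have A5 : ω ^ (l₁ - 1) = ω ^ 2 := hpow2 l₁ hm1 (by omega)
  have A6 : ω ^ (l₂ - 1) = ω ^ 2 := hpow2 l₂ hm2 (by omega)
  have B1 : (ω ^ 2) ^ l₁ = 1 := by rw [← pow_mul, mul_comm, pow_mul, A1, one_pow]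
  have B2 : (ω ^ 2) ^ l₂ = 1 := by rw [← pow_mul, mul_comm, pow_mul, A2, one_pow]
  have B3 : (ω ^ 2) ^ (l₁ + 1) = ω ^ 2 := by rw [pow_succ, B1, one_mul]
  have B4 : (ω ^ 2) ^ (l₂ + 1) = ω ^ 2 := by rw [pow_succ, B2, one_mul]
  have hω4 : ω ^ 4 = ω := by
    have : ω ^ 4 = ω ^ 3 * ω := by ring
    rw [this, hω3, one_mul]
  have B5 : (ω ^ 2) ^ (l₁ - 1) = ω := by
    rw [← pow_mul, mul_comm, pow_mul, A5, ← pow_mul]; norm_num [hω4]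
  have B6 : (ω ^ 2) ^ (l₂ - 1) = ω := by
    rw [← pow_mul, mul_comm, pow_mul, A6, ← pow_mul]; norm_num [hω4]
  rw [A1, A2, A3, A4] at e0a
  rw [B1, B2, B3, B4] at e0b
  rw [A1, A2, A5, A6] at e1a
  rw [B1, B2, B5, B6] at e1b
  -- casts of subtractions
  have c1 : ((l₁ - 1 : ℕ) : ZMod p) = (l₁ : ZMod p) - 1 := by
    push_cast [Nat.cast_sub (show 1 ≤ l₁ by omega)]; ring
  have c2 : ((l₂ - 1 : ℕ) : ZMod p) = (l₂ : ZMod p) - 1 := by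
    push_cast [Nat.cast_sub (show 1 ≤ l₂ by omega)]; ring
  have c3 : ((l₁ - 1 - 1 : ℕ) : ZMod p) = (l₁ : ZMod p) - 2 := by
    rw [show l₁ - 1 - 1 = l₁ - 2 from by omega,
      Nat.cast_sub (show 2 ≤ l₁ by omega)]; norm_num
  have c4 : ((l₂ - 1 - 1 : ℕ) : ZMod p) = (l₂ : ZMod p) - 2 := by
    rw [show l₂ - 1 - 1 = l₂ - 2 from by omega,
      Nat.cast_sub (show 2 ≤ l₂ by omega)]; norm_num
  rw [c1, c2] at h2
  rw [c1, c2, c3, c4] at h3'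
  set L₁ : ZMod p := (l₁ : ZMod p) with hL₁
  set L₂ : ZMod p := (l₂ : ZMod p) with hL₂
  -- nonvanishing facts
  have hpl2 : ¬ (p ∣ l₂) := fun h => hp (((h.mul_left l₁)).mul_right _)
  have hpd : ¬ (p ∣ l₂ - l₁) := fun h => hp (h.mul_left _)
  have nL2 : L₂ ≠ 0 := by
    rw [hL₂, Ne, ZMod.natCast_eq_zero_iff]; exact hpl2
  have nD : L₂ - L₁ ≠ 0 := by
    rw [hL₂, hL₁, ← Nat.cast_sub hl12.le, Ne, ZMod.natCast_eq_zero_iff]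
    exact hpd
  have hωsub : ω ^ 2 - ω ≠ 0 := by
    intro h
    apply hω1
    have h' : ω * (ω - 1) = 0 := by linear_combination h
    rcases mul_eq_zero.mp h' with h'' | h''
    · exact absurd h'' hω0
    · exact sub_eq_zero.mp h''
  -- derive scalar equations
  have hS : (a₁ + a₃ + a₅) * (ω - ω ^ 2) = 0 := by linear_combination e0a - e0b
  have hS' : a₁ + a₃ + a₅ = 0 := by
    rcases mul_eq_zero.mp hS with h | h
    · exact h
    · exact absurd (by linear_combination -h) hωsub
  have hT : (L₁ * a₂ + L₂ * a₄) * (ω ^ 2 - ω) = 0 := by linear_combination e1a - e1b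
  have hT' : L₁ * a₂ + L₂ * a₄ = 0 := by
    rcases mul_eq_zero.mp hT with h | h
    · exact h
    · exact absurd h hωsub
  have hU : L₁ * a₃ + L₂ * a₅ = 0 := by
    linear_combination e1a - ω ^ 2 * hT' - hS'
  have hE2 : L₂ * (L₂ - L₁) * (a₄ + a₅) = 0 := by
    linear_combination h2 - (L₁ - 1) * hT' - (L₁ + 1) * hU
  have ha45 : a₄ + a₅ = 0 := by
    rcases mul_eq_zero.mp hE2 with h | h
    · rcases mul_eq_zero.mp h with h' | h'
      · exact absurd h' nL2
      · exact absurd h' nD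
    · exact h
  have hE3 : L₂ * (L₂ - L₁) * ((L₁ + L₂ - 3) * a₄ + (L₁ + L₂) * a₅) = 0 := by
    linear_combination h3' - (L₁ - 1) * (L₁ - 2) * hT' - (L₁ ^ 2 - 1) * hU
  have hW : (L₁ + L₂ - 3) * a₄ + (L₁ + L₂) * a₅ = 0 := by
    rcases mul_eq_zero.mp hE3 with h | h
    · rcases mul_eq_zero.mp h with h' | h'
      · exact absurd h' nL2
      · exact absurd h' nD
    · exact h
  have h3a5 : (3 : ZMod p) * a₅ = 0 := by
    linear_combination hW - (L₁ + L₂ - 3) * ha45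
  have hp3 : p ≠ 3 := by
    intro h; rw [h] at h3; omega
  have h3ne : (3 : ZMod p) ≠ 0 := by
    have : ((3 : ℕ) : ZMod p) ≠ 0 := by
      rw [Ne, ZMod.natCast_eq_zero_iff]
      intro h
      exact hp3 ((Nat.prime_dvd_prime_iff_eq (Fact.out) (by norm_num)).mp h)
    simpa using this
  rcases mul_eq_zero.mp h3a5 with h | h
  · exact absurd h h3ne
  · exact h
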